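/- Let (E,d) be a random metric space with base (Ω,𝓕,P) that is (ε,λ)-complete (i.e., complete under the metrizable uniformity with base U(ε,λ) = {(x,y) : P(d(x,y) < ε) > 1−λ}). Let α ∈ L⁰₊(𝓕) satisfy α < 1 almost surely, and let T : E → E satisfy d(T(x),T(y)) ≤ α·d(x,y) for all x,y ∈ E. Then T has a unique fixed point x* in E. -/

import Mathlib

open MeasureTheory Filter Set Topology

variable {Ω : Type*} [MeasurableSpace Ω]

/-- `(E,d)` is a random metric space with base `(Ω,𝓕,μ)`: `d x y` represents an element of
`L⁰₊(𝓕)` (nonnegative a.e.), equality/inequality of distances being understood a.e. -/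
structure IsRandomMetric (μ : Measure Ω) {E : Type*} (d : E → E → Ω → ℝ) : Prop where
  meas : ∀ x y, Measurable (d x y)
  nonneg : ∀ x y, ∀ᵐ ω ∂μ, 0 ≤ d x y ω
  eq_zero_iff : ∀ x y, (d x y =ᵐ[μ] 0) ↔ x = y
  symm : ∀ x y, d x y =ᵐ[μ] d y x
  triangle : ∀ x y z, ∀ᵐ ω ∂μ, d x z ω ≤ d x y ω + d y z ω

/-- Cauchy sequence for the `(ε,λ)`-uniformity with base
`U(ε,λ) = {(x,y) : μ (d(x,y) < ε) > 1 − λ}`. -/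
def ELCauchy (μ : Measure Ω) {E : Type*} (d : E → E → Ω → ℝ) (s : ℕ → E) : Prop :=
  ∀ ε : ℝ, 0 < ε → ∀ l : ℝ, 0 < l → l < 1 →
    ∃ N, ∀ m ≥ N, ∀ n ≥ N, μ {ω | d (s m) (s n) ω < ε} > ENNReal.ofReal (1 - l)

/-- Convergence for the `(ε,λ)`-uniformity (convergence in probability of distances). -/
def ELTendsto (μ : Measure Ω) {E : Type*} (d : E → E → Ω → ℝ) (s : ℕ → E) (x : E) : Prop :=
  ∀ ε : ℝ, 0 < ε → ∀ l : ℝ, 0 < l → l < 1 →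
    ∃ N, ∀ n ≥ N, μ {ω | d (s n) x ω < ε} > ENNReal.ofReal (1 - l)

/-- `(ε,λ)`-completeness: the metrizable `(ε,λ)`-uniformity is complete. -/
def ELComplete (μ : Measure Ω) {E : Type*} (d : E → E → Ω → ℝ) : Prop :=
  ∀ s : ℕ → E, ELCauchy μ d s → ∃ x, ELTendsto μ d s x

private lemma real_geom_bound {a : ℝ} (ha0 : 0 ≤ a) (ha1 : a < 1)
    {D : ℕ → ℕ → ℝ} (hc : 0 ≤ D 0 1)
    (hdiag : ∀ i, D i i = 0)
    (htri : ∀ i j k, D i k ≤ D i j + D j k)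
    (hstep : ∀ n, D (n+1) (n+2) ≤ a * D n (n+1)) :
    ∀ m n, m ≤ n → D m n ≤ a ^ m * D 0 1 / (1 - a) := by
  have h1 : ∀ k, D k (k+1) ≤ a ^ k * D 0 1 := by
    intro k
    induction k with
    | zero => simp
    | succ k ih =>
      calc D (k+1) (k+2) ≤ a * D k (k+1) := hstep k
        _ ≤ a * (a ^ k * D 0 1) := mul_le_mul_of_nonneg_left ih ha0
        _ = a ^ (k+1) * D 0 1 := by ring
  have h2 : ∀ m n, m ≤ n → D m n ≤ (∑ k ∈ Finset.Ico m n, a ^ k) * D 0 1 := by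
    intro m n hmn
    induction n, hmn using Nat.le_induction with
    | base => simp [hdiag]
    | succ n hmn ih =>
      calc D m (n+1) ≤ D m n + D n (n+1) := htri m n (n+1)
        _ ≤ (∑ k ∈ Finset.Ico m n, a ^ k) * D 0 1 + a ^ n * D 0 1 := add_le_add ih (h1 n)
        _ = (∑ k ∈ Finset.Ico m (n+1), a ^ k) * D 0 1 := by
            rw [Finset.sum_Ico_succ_top hmn]; ring
  intro m n hmn
  have h3 : (∑ k ∈ Finset.Ico m n, a ^ k) ≤ a ^ m / (1 - a) := by
    rw [geom_sum_Ico (ne_of_lt ha1) hmn]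
    have h4 : (a ^ n - a ^ m) / (a - 1) = (a ^ m - a ^ n) / (1 - a) := by
      rw [div_eq_div_iff (by intro h; nlinarith) (by intro h; nlinarith)]; ring
    rw [h4]
    exact (div_le_div_iff_of_pos_right (by linarith)).2 (by nlinarith [pow_nonneg ha0 n])
  calc D m n ≤ (∑ k ∈ Finset.Ico m n, a ^ k) * D 0 1 := h2 m n hmn
    _ ≤ (a ^ m / (1 - a)) * D 0 1 := mul_le_mul_of_nonneg_right h3 hc
    _ = a ^ m * D 0 1 / (1 - a) := by ring

private lemma prob_gt_of_compl_lt {μ : Measure Ω} [IsProbabilityMeasure μ] {S : Set Ω}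
    (hS : MeasurableSet S) {l : ℝ} (hl0 : 0 < l) (hl1 : l < 1)
    (h : μ Sᶜ < ENNReal.ofReal l) : ENNReal.ofReal (1 - l) < μ S := by
  have hsum : μ S + μ Sᶜ = 1 := prob_add_prob_compl hS
  have key : ENNReal.ofReal (1 - l) + μ Sᶜ < μ S + μ Sᶜ := by
    rw [hsum]
    calc ENNReal.ofReal (1 - l) + μ Sᶜ < ENNReal.ofReal (1 - l) + ENNReal.ofReal l :=
          ENNReal.add_lt_add_left (by simp) h
      _ = ENNReal.ofReal ((1 - l) + l) := (ENNReal.ofReal_add (by linarith) hl0.le).symm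
      _ = 1 := by norm_num
  exact (ENNReal.add_lt_add_iff_right (measure_ne_top μ _)).1 key

private lemma compl_lt_of_prob_gt {μ : Measure Ω} [IsProbabilityMeasure μ] {S : Set Ω}
    (hS : MeasurableSet S) {l : ℝ} (hl0 : 0 < l) (hl1 : l < 1)
    (h : ENNReal.ofReal (1 - l) < μ S) : μ Sᶜ < ENNReal.ofReal l := by
  have hsum : μ Sᶜ + μ S = 1 := by rw [add_comm]; exact prob_add_prob_compl hS
  have key : μ Sᶜ + ENNReal.ofReal (1 - l) < ENNReal.ofReal l + ENNReal.ofReal (1 - l) := by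
    calc μ Sᶜ + ENNReal.ofReal (1 - l) < μ Sᶜ + μ S :=
          ENNReal.add_lt_add_left (measure_ne_top μ _) h
      _ = 1 := hsum
      _ = ENNReal.ofReal (l + (1 - l)) := by norm_num
      _ = ENNReal.ofReal l + ENNReal.ofReal (1 - l) := ENNReal.ofReal_add hl0.le (by linarith)
  exact (ENNReal.add_lt_add_iff_right (by simp)).1 key

private lemma prob_eq_one {μ : Measure Ω} [IsProbabilityMeasure μ] {S : Set Ω}
    (h : ∀ l : ℝ, 0 < l → l < 1 → ENNReal.ofReal (1 - l) < μ S) : μ S = 1 := by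
  by_contra hne
  have hlt : μ S < 1 := lt_of_le_of_ne prob_le_one hne
  set r := (μ S).toReal with hr
  have hfin : μ S = ENNReal.ofReal r := (ENNReal.ofReal_toReal (measure_ne_top μ S)).symm
  have hr0 : 0 ≤ r := ENNReal.toReal_nonneg
  have hr1 : r < 1 := by
    have := (ENNReal.toReal_lt_toReal (measure_ne_top μ S) (by simp)).2 hlt
    simpa using this
  have hl := h ((1 - r)/2) (by linarith) (by linarith)
  rw [hfin] at hl
  have : r ≤ 1 - (1 - r)/2 := by linarith
  exact absurd hl (not_lt.2 (ENNReal.ofReal_le_ofReal this))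

/-- random Banach contraction mapping principle. -/
theorem random_contraction_fixed_point {E : Type*} [Nonempty E]
    (μ : Measure Ω) [IsProbabilityMeasure μ]
    (d : E → E → Ω → ℝ) (hd : IsRandomMetric μ d) (hcomp : ELComplete μ d)
    (α : Ω → ℝ) (hαm : Measurable α)
    (hα0 : ∀ᵐ ω ∂μ, 0 ≤ α ω) (hα1 : ∀ᵐ ω ∂μ, α ω < 1)
    (T : E → E)
    (hT : ∀ x y, ∀ᵐ ω ∂μ, d (T x) (T y) ω ≤ α ω * d x y ω) :
    ∃! x : E, T x = x := by
  classical
  obtain ⟨x0⟩ := ‹Nonempty E›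
  set s : ℕ → E := fun n => T^[n] x0 with hs
  have hsucc : ∀ n, s (n+1) = T (s n) := fun n => Function.iterate_succ_apply' T n x0
  -- master a.e. set
  have hstepAE : ∀ᵐ ω ∂μ, ∀ n, d (s (n+1)) (s (n+2)) ω ≤ α ω * d (s n) (s (n+1)) ω := by
    rw [ae_all_iff]
    intro n
    have h := hT (s n) (s (n+1))
    rw [← hsucc n, ← hsucc (n+1)] at h
    exact h
  have hdiagAE : ∀ᵐ ω ∂μ, ∀ i, d (s i) (s i) ω = 0 := by
    rw [ae_all_iff]
    intro i
    exact (hd.eq_zero_iff (s i) (s i)).2 rfl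
  have htriAE : ∀ᵐ ω ∂μ, ∀ i j k, d (s i) (s k) ω ≤ d (s i) (s j) ω + d (s j) (s k) ω := by
    rw [ae_all_iff]; intro i; rw [ae_all_iff]; intro j; rw [ae_all_iff]; intro k
    exact hd.triangle (s i) (s j) (s k)
  -- the dominating sequence
  set g : ℕ → Ω → ℝ := fun m ω => α ω ^ m * d (s 0) (s 1) ω / (1 - α ω) with hg
  have hgmeas : ∀ m, Measurable (g m) :=
    fun m => ((hαm.pow_const m).mul (hd.meas _ _)).div (measurable_const.sub hαm)
  have hbound : ∀ᵐ ω ∂μ, ∀ m n, m ≤ n → d (s m) (s n) ω ≤ g m ω := by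
    filter_upwards [hα0, hα1, hd.nonneg (s 0) (s 1), hstepAE, hdiagAE, htriAE]
      with ω h0 h1 hc hstep hdiag htri
    intro m n hmn
    exact real_geom_bound h0 h1 hc hdiag htri hstep m n hmn
  have htend : ∀ᵐ ω ∂μ, Tendsto (fun m => g m ω) atTop (𝓝 0) := by
    filter_upwards [hα0, hα1] with ω h0 h1
    have hp : Tendsto (fun m => α ω ^ m) atTop (𝓝 0) :=
      tendsto_pow_atTop_nhds_zero_of_lt_one h0 h1
    have := hp.mul_const (d (s 0) (s 1) ω / (1 - α ω))
    simpa [hg, mul_div_assoc] using this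
  have htm : TendstoInMeasure μ g atTop (fun _ => (0:ℝ)) :=
    tendstoInMeasure_of_tendsto_ae (fun m => (hgmeas m).aestronglyMeasurable) htend
  -- Cauchy
  have hcauchy : ELCauchy μ d s := by
    intro ε hε l hl0 hl1
    have hev : ∀ᶠ m in atTop, μ {ω | ε ≤ dist (g m ω) 0} < ENNReal.ofReal l :=
      (tendstoInMeasure_iff_dist.1 htm ε hε).eventually_lt_const (ENNReal.ofReal_pos.2 hl0)
    obtain ⟨N, hN⟩ := eventually_atTop.1 hev
    have key : ∀ m n, N ≤ m → m ≤ n →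
        ENNReal.ofReal (1 - l) < μ {ω | d (s m) (s n) ω < ε} := by
      intro m n hNm hmn
      have hS : MeasurableSet {ω | d (s m) (s n) ω < ε} :=
        measurableSet_lt (hd.meas _ _) measurable_const
      have hcompl : {ω | d (s m) (s n) ω < ε}ᶜ = {ω | ε ≤ d (s m) (s n) ω} := by
        ext ω; simp [not_lt]
      have hsub : μ {ω | ε ≤ d (s m) (s n) ω} ≤ μ {ω | ε ≤ dist (g m ω) 0} := by
        apply measure_mono_ae
        filter_upwards [hbound] with ω hb hω
        have hω' : ε ≤ d (s m) (s n) ω := hω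
        have h2 : d (s m) (s n) ω ≤ g m ω := hb m n hmn
        have h3 : ε ≤ g m ω := le_trans hω' h2
        show ε ≤ dist (g m ω) 0
        rw [Real.dist_0_eq_abs]
        exact h3.trans (le_abs_self _)
      apply prob_gt_of_compl_lt hS hl0 hl1
      rw [hcompl]
      exact lt_of_le_of_lt hsub (hN m hNm)
    refine ⟨N, fun m hm n hn => ?_⟩
    rcases le_total m n with hmn | hnm
    · exact key m n hm hmn
    · have heq : μ {ω | d (s m) (s n) ω < ε} = μ {ω | d (s n) (s m) ω < ε} := by
        apply measure_congr
        rw [eventuallyEq_set]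
        filter_upwards [hd.symm (s m) (s n)] with ω hω
        simp only [Set.mem_setOf_eq, hω]
      rw [heq]
      exact key n m hn hnm
  obtain ⟨x, hx⟩ := hcomp s hcauchy
  -- T x = x
  have hfix : T x = x := by
    have hzero : ∀ ε : ℝ, 0 < ε → μ {ω | ε ≤ d (T x) x ω} = 0 := by
      intro ε hε
      have hS : MeasurableSet {ω | d (T x) x ω < ε} :=
        measurableSet_lt (hd.meas _ _) measurable_const
      have hone : μ {ω | d (T x) x ω < ε} = 1 := by
        apply prob_eq_one
        intro l hl0 hl1
        obtain ⟨N₁, hN₁⟩ := hx (ε/2) (by linarith) (l/2) (by linarith) (by linarith)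
        set A := {ω | d (s N₁) x ω < ε/2} with hA
        set B := {ω | d (s (N₁+1)) x ω < ε/2} with hB
        have hAm : MeasurableSet A := measurableSet_lt (hd.meas _ _) measurable_const
        have hBm : MeasurableSet B := measurableSet_lt (hd.meas _ _) measurable_const
        have hAc : μ Aᶜ < ENNReal.ofReal (l/2) :=
          compl_lt_of_prob_gt hAm (by linarith) (by linarith) (hN₁ N₁ le_rfl)
        have hBc : μ Bᶜ < ENNReal.ofReal (l/2) :=
          compl_lt_of_prob_gt hBm (by linarith) (by linarith) (hN₁ (N₁+1) (Nat.le_succ N₁))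
        have hTsucc : ∀ᵐ ω ∂μ, d (T x) (s (N₁+1)) ω ≤ α ω * d x (s N₁) ω := by
          have h := hT x (s N₁)
          rw [← hsucc N₁] at h
          exact h
        have hsub : μ {ω | d (T x) x ω < ε}ᶜ ≤ μ (Aᶜ ∪ Bᶜ) := by
          apply measure_mono_ae
          filter_upwards [hα0, hα1, hTsucc, hd.triangle (T x) (s (N₁+1)) x,
            hd.symm x (s N₁), hd.nonneg (s N₁) x] with ω h0 h1 hts htri hsym hnn
          intro hω
          have hω' : ¬ d (T x) x ω < ε := hω
          by_cases hAω : d (s N₁) x ω < ε/2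
          swap
          · exact Or.inl hAω
          by_cases hBω : d (s (N₁+1)) x ω < ε/2
          swap
          · exact Or.inr hBω
          exfalso
          have h2 : d (T x) (s (N₁+1)) ω ≤ d (s N₁) x ω := by
            calc d (T x) (s (N₁+1)) ω ≤ α ω * d x (s N₁) ω := hts
              _ = α ω * d (s N₁) x ω := by rw [hsym]
              _ ≤ d (s N₁) x ω := mul_le_of_le_one_left hnn h1.le
          have : d (T x) x ω < ε := by
            calc d (T x) x ω ≤ d (T x) (s (N₁+1)) ω + d (s (N₁+1)) x ω := htri
              _ ≤ d (s N₁) x ω + d (s (N₁+1)) x ω := add_le_add_left h2 _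
              _ < ε/2 + ε/2 := add_lt_add hAω hBω
              _ = ε := by ring
          exact hω' this
        apply prob_gt_of_compl_lt hS hl0 hl1
        calc μ {ω | d (T x) x ω < ε}ᶜ ≤ μ (Aᶜ ∪ Bᶜ) := hsub
          _ ≤ μ Aᶜ + μ Bᶜ := measure_union_le _ _
          _ < ENNReal.ofReal (l/2) + ENNReal.ofReal (l/2) := ENNReal.add_lt_add hAc hBc
          _ = ENNReal.ofReal l := by
              rw [← ENNReal.ofReal_add (by linarith) (by linarith)]; norm_num
      have := measure_compl hS (measure_ne_top μ _)
      rw [hone, measure_univ] at this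
      have hset : {ω | ε ≤ d (T x) x ω} = {ω | d (T x) x ω < ε}ᶜ := by
        ext ω; simp [not_lt]
      rw [hset, this]
      simp
    have hae : ∀ᵐ ω ∂μ, ∀ k : ℕ, d (T x) x ω < 1/(k+1) := by
      rw [ae_all_iff]
      intro k
      have hpos : (0:ℝ) < 1/(k+1) := by positivity
      have := hzero (1/(k+1)) hpos
      rw [ae_iff]
      convert this using 2
      ext ω; simp [not_lt]
    have heq0 : d (T x) x =ᵐ[μ] 0 := by
      filter_upwards [hae, hd.nonneg (T x) x] with ω h1 h2
      by_contra hne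
      have hpos : 0 < d (T x) x ω := lt_of_le_of_ne h2 (by simpa [eq_comm] using hne)
      obtain ⟨k, hk⟩ := exists_nat_one_div_lt hpos
      exact absurd (h1 k) (not_lt.2 (by linarith))
    exact (hd.eq_zero_iff (T x) x).1 heq0
  refine ⟨x, hfix, fun y hy => ?_⟩
  have heq0 : d y x =ᵐ[μ] 0 := by
    filter_upwards [hT y x, hα1, hd.nonneg y x] with ω h1 hα hnn
    rw [hy, hfix] at h1
    have : d y x ω = 0 := by nlinarith
    simpa using this
  exact (hd.eq_zero_iff y x).1 heq0
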